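/- Let n, k be positive integers, let S = P_1 × ⋯ × P_n be a product distribution on [k]^n for which Δ⃗ = (Δ_1,…,Δ_n) is a regular drift sequence with respect to TV, and let 1 ≤ r ≤ n. Let P̂^r be the empirical distribution of the last r samples, P̂^r(j) = (1/r)·∑_{i=n−r+1}^n 1{X_i = j}. Then E_{X∼S}[TV(P_n, P̂^r)] ≤ (1/2)·√(k/r) + Δ_{n−r+1}. -/

import Mathlib

open Finset

/-- `p` is a probability mass function on `Fin k` (representing `[k] = {1,…,k}`). -/
def IsPMF {k : ℕ} (p : Fin k → ℝ) : Prop :=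
  (∀ j, 0 ≤ p j) ∧ ∑ j, p j = 1

/-- Total variation distance between two pmfs on `Fin k`. -/
noncomputable def TV {k : ℕ} (p q : Fin k → ℝ) : ℝ :=
  (1 / 2) * ∑ j, |p j - q j|

/-- Probability of the sample `x` under the product distribution whose `i`-th component
(1-based, `i = 1,…,n`) is `P i`. -/
noncomputable def prodProb {n k : ℕ} (P : ℕ → Fin k → ℝ) (x : Fin n → Fin k) : ℝ :=
  ∏ i : Fin n, P (i.1 + 1) (x i)

/-- Expectation of `f` over the product distribution `P 1 × ⋯ × P n` on `[k]^n`. -/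
noncomputable def Exp {n k : ℕ} (P : ℕ → Fin k → ℝ) (f : (Fin n → Fin k) → ℝ) : ℝ :=
  ∑ x : Fin n → Fin k, prodProb P x * f x

section Aux

variable {n k : ℕ} (P : ℕ → Fin k → ℝ)

lemma exp_prod (h : Fin n → Fin k → ℝ) :
    Exp P (fun x => ∏ i, h i (x i)) = ∏ i : Fin n, ∑ a, P (i.1 + 1) a * h i a := by
  rw [Finset.prod_univ_sum, Fintype.piFinset_univ]
  unfold Exp prodProb
  exact Finset.sum_congr rfl fun x _ => (Finset.prod_mul_distrib).symm

lemma exp_sum {ι : Type*} (s : Finset ι) (g : ι → (Fin n → Fin k) → ℝ) :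
    Exp P (fun x => ∑ i ∈ s, g i x) = ∑ i ∈ s, Exp P (g i) := by
  unfold Exp
  simp only [Finset.mul_sum]
  exact Finset.sum_comm

variable (hp1 : ∀ i : Fin n, ∑ a, P (i.1 + 1) a = 1)

include hp1 in
lemma exp_single (i0 : Fin n) (f : Fin k → ℝ) :
    Exp P (fun x => f (x i0)) = ∑ a, P (i0.1 + 1) a * f a := by
  have h := exp_prod P (fun i a => if i = i0 then f a else 1)
  have l1 : ∀ x : Fin n → Fin k, (∏ i, if i = i0 then f (x i) else 1) = f (x i0) := by
    intro x
    rw [Finset.prod_ite_eq' Finset.univ i0 (fun i => f (x i))]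
    simp
  have l2 : (∏ i : Fin n, ∑ a, P (i.1 + 1) a * (if i = i0 then f a else 1)) =
      ∑ a, P (i0.1 + 1) a * f a := by
    rw [← Finset.prod_subset (Finset.subset_univ {i0})]
    · simp
    · intro i _ hi
      simp only [Finset.mem_singleton] at hi
      simp [hi, hp1 i]
  rw [← l2, ← h]
  unfold Exp
  exact Finset.sum_congr rfl fun x _ => by simp only [l1 x]

include hp1 in
lemma exp_pair (i0 i1 : Fin n) (hne : i0 ≠ i1) (f g : Fin k → ℝ) :
    Exp P (fun x => f (x i0) * g (x i1)) =
      (∑ a, P (i0.1 + 1) a * f a) * (∑ a, P (i1.1 + 1) a * g a) := by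
  have h := exp_prod P (fun i a => if i = i0 then f a else if i = i1 then g a else 1)
  have key : ∀ (F : Fin n → ℝ), (∀ i, i ≠ i0 → i ≠ i1 → F i = 1) →
      ∏ i, F i = F i0 * F i1 := by
    intro F hF
    rw [← Finset.prod_subset (Finset.subset_univ ({i0, i1} : Finset (Fin n)))
      (fun i _ hi => by
        simp only [Finset.mem_insert, Finset.mem_singleton] at hi
        push_neg at hi
        exact hF i hi.1 hi.2)]
    exact Finset.prod_pair hne
  have l1 : ∀ x : Fin n → Fin k,
      (∏ i, if i = i0 then f (x i) else if i = i1 then g (x i) else 1) = f (x i0) * g (x i1) := by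
    intro x
    rw [key _ (fun i h0 h1 => by simp [h0, h1])]
    simp [hne, hne.symm]
  have l2 : (∏ i : Fin n, ∑ a, P (i.1 + 1) a * (if i = i0 then f a else if i = i1 then g a else 1)) =
      (∑ a, P (i0.1 + 1) a * f a) * (∑ a, P (i1.1 + 1) a * g a) := by
    rw [key _ (fun i h0 h1 => by simp [h0, h1, hp1 i])]
    simp [hne, hne.symm]
  rw [← l2, ← h]
  unfold Exp
  exact Finset.sum_congr rfl fun x _ => by simp only [l1 x]

include hp1 in
lemma exp_sq_sum (c : Fin n → Fin k → ℝ) (hc : ∀ i, ∑ a, P (i.1 + 1) a * c i a = 0) :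
    Exp P (fun x => (∑ i, c i (x i)) ^ 2) = ∑ i : Fin n, ∑ a, P (i.1 + 1) a * c i a ^ 2 := by
  have e1 : ∀ x : Fin n → Fin k, (∑ i, c i (x i)) ^ 2
      = ∑ i : Fin n, ∑ i' : Fin n, c i (x i) * c i' (x i') := by
    intro x; rw [sq, Finset.sum_mul_sum]
  have hfg : (fun x : Fin n → Fin k => (∑ i, c i (x i)) ^ 2)
      = fun x => ∑ i : Fin n, ∑ i' : Fin n, c i (x i) * c i' (x i') := funext e1
  calc Exp P (fun x => (∑ i, c i (x i)) ^ 2)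
      = ∑ i : Fin n, ∑ i' : Fin n, Exp P (fun x => c i (x i) * c i' (x i')) := by
        rw [hfg, exp_sum]
        exact Finset.sum_congr rfl fun i _ => by rw [exp_sum]
    _ = ∑ i : Fin n, ∑ a, P (i.1 + 1) a * c i a ^ 2 := by
        apply Finset.sum_congr rfl
        intro i _
        rw [Finset.sum_eq_single i]
        · calc Exp P (fun x => c i (x i) * c i (x i))
              = ∑ a, P (i.1 + 1) a * (c i a * c i a) := exp_single P hp1 i (fun a => c i a * c i a)
            _ = ∑ a, P (i.1 + 1) a * c i a ^ 2 :=
                Finset.sum_congr rfl fun a _ => by ring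
        · intro i' _ hne
          rw [exp_pair P hp1 i i' (Ne.symm hne) (c i) (c i'), hc i, zero_mul]
        · simp

end Aux

section Aux2

variable {n k : ℕ} (P : ℕ → Fin k → ℝ)

lemma prodProb_nonneg (hp0 : ∀ i : Fin n, ∀ a, 0 ≤ P (i.1 + 1) a) (x : Fin n → Fin k) :
    0 ≤ prodProb P x :=
  Finset.prod_nonneg fun i _ => hp0 i (x i)

lemma sum_prodProb (hp1 : ∀ i : Fin n, ∑ a, P (i.1 + 1) a = 1) :
    ∑ x : Fin n → Fin k, prodProb P x = 1 := by
  have h := exp_prod (n := n) P (fun _ _ => (1 : ℝ))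
  simpa [Exp, hp1] using h

lemma exp_add (f g : (Fin n → Fin k) → ℝ) :
    Exp P (fun x => f x + g x) = Exp P f + Exp P g := by
  unfold Exp; rw [← Finset.sum_add_distrib]
  exact Finset.sum_congr rfl fun x _ => by ring

lemma exp_const_mul (a : ℝ) (f : (Fin n → Fin k) → ℝ) :
    Exp P (fun x => a * f x) = a * Exp P f := by
  unfold Exp; rw [Finset.mul_sum]
  exact Finset.sum_congr rfl fun x _ => by ring

lemma exp_const (hp1 : ∀ i : Fin n, ∑ a, P (i.1 + 1) a = 1) (a : ℝ) :
    Exp (n := n) P (fun _ => a) = a := by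
  unfold Exp
  rw [← Finset.sum_mul, sum_prodProb P hp1, one_mul]

lemma exp_mono (hp0 : ∀ i : Fin n, ∀ a, 0 ≤ P (i.1 + 1) a) {f g : (Fin n → Fin k) → ℝ}
    (h : ∀ x, f x ≤ g x) : Exp P f ≤ Exp P g :=
  Finset.sum_le_sum fun x _ => mul_le_mul_of_nonneg_left (h x) (prodProb_nonneg P hp0 x)

lemma exp_nonneg (hp0 : ∀ i : Fin n, ∀ a, 0 ≤ P (i.1 + 1) a) {f : (Fin n → Fin k) → ℝ}
    (h : ∀ x, 0 ≤ f x) : 0 ≤ Exp P f :=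
  Finset.sum_nonneg fun x _ => mul_nonneg (prodProb_nonneg P hp0 x) (h x)

lemma exp_abs_le_sqrt (hp0 : ∀ i : Fin n, ∀ a, 0 ≤ P (i.1 + 1) a)
    (hp1 : ∀ i : Fin n, ∑ a, P (i.1 + 1) a = 1) (f : (Fin n → Fin k) → ℝ) :
    Exp P (fun x => |f x|) ≤ Real.sqrt (Exp P (fun x => f x ^ 2)) := by
  have hw0 := prodProb_nonneg P hp0
  have hA : 0 ≤ Exp P (fun x => |f x|) := exp_nonneg P hp0 fun x => abs_nonneg _
  have hB : 0 ≤ Exp P (fun x => f x ^ 2) := exp_nonneg P hp0 fun x => sq_nonneg _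
  rw [Real.le_sqrt hA hB]
  calc Exp P (fun x => |f x|)  ^ 2
      = (∑ x : Fin n → Fin k, Real.sqrt (prodProb P x) * (Real.sqrt (prodProb P x) * |f x|)) ^ 2 := by
        unfold Exp
        congr 1
        exact Finset.sum_congr rfl fun x _ => by
          rw [← mul_assoc, Real.mul_self_sqrt (hw0 x)]
    _ ≤ (∑ x : Fin n → Fin k, Real.sqrt (prodProb P x) ^ 2) *
        (∑ x : Fin n → Fin k, (Real.sqrt (prodProb P x) * |f x|) ^ 2) :=
        Finset.sum_mul_sq_le_sq_mul_sq _ _ _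
    _ = (∑ x : Fin n → Fin k, prodProb P x) * (∑ x : Fin n → Fin k, prodProb P x * f x ^ 2) := by
        congr 1
        · exact Finset.sum_congr rfl fun x _ => Real.sq_sqrt (hw0 x)
        · exact Finset.sum_congr rfl fun x _ => by
            rw [mul_pow, Real.sq_sqrt (hw0 x), sq_abs]
    _ = Exp P (fun x => f x ^ 2) := by rw [sum_prodProb P hp1, one_mul]; rfl

lemma count_sum (n r : ℕ) (hrn : r ≤ n) :
    ∑ i : Fin n, (if n - r ≤ i.1 then (1 : ℝ) else 0) = r := by
  rw [Fin.sum_univ_eq_sum_range (fun i => if n - r ≤ i then (1 : ℝ) else 0), Finset.sum_boole]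
  have h : Finset.filter (fun i => n - r ≤ i) (Finset.range n) = Finset.Ico (n - r) n := by
    ext a; simp; omega
  rw [h, Nat.card_Ico]
  have : n - (n - r) = r := by omega
  rw [this]

lemma drift_mono (n : ℕ) (Δ : ℕ → ℝ) (hmono : ∀ i ∈ Finset.Icc 1 (n - 1), Δ (i + 1) ≤ Δ i)
    {a b : ℕ} (ha : 1 ≤ a) (hab : a ≤ b) (hbn : b ≤ n) : Δ b ≤ Δ a := by
  induction b with
  | zero => omega
  | succ b ih =>
    rcases Nat.eq_or_lt_of_le hab with h | h
    · rw [← h]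
    · exact le_trans (hmono b (by simp [Finset.mem_Icc]; omega)) (ih (by omega) (by omega))

end Aux2

/-- Regular drift sequence requirements on `Δ` (1-based indices `1,…,n`),
with regularity constant `c`. -/
def IsRegularDriftSeq (n : ℕ) (c : ℝ) (Δ : ℕ → ℝ) : Prop :=
  (∀ i ∈ Finset.Icc 1 n, 0 ≤ Δ i) ∧
  (∀ i ∈ Finset.Icc 1 (n - 1), Δ (i + 1) ≤ Δ i) ∧
  (∀ i ∈ Finset.Icc 2 (n - 1), Δ (i - 1) ≤ c * Δ i) ∧
  (∀ i ∈ Finset.Icc 1 n, (Δ i = 0 ↔ i = n))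

/-- The empirical distribution of the last `r` samples:
`P̂^r(j) = (1/r)·∑_{i=n−r+1}^n 1{X_i = j}` (sample indices are 1-based). -/
noncomputable def empiricalDist {n : ℕ} (k r : ℕ) (x : Fin n → Fin k) (j : Fin k) : ℝ :=
  (1 / (r : ℝ)) * ∑ i : Fin n, if n - r ≤ (i : ℕ) ∧ x i = j then 1 else 0

/-- For a product distribution with regular drift sequence `Δ⃗` w.r.t. TV,
the empirical distribution of the last `r` samples satisfies
`E[TV(P_n, P̂^r)] ≤ (1/2)·√(k/r) + Δ_{n−r+1}`. -/
theorem stmt1 (n k r : ℕ) (hn : 0 < n) (hk : 0 < k) (hr1 : 1 ≤ r) (hrn : r ≤ n)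
    (c : ℝ) (hc : 1 ≤ c) (Δ : ℕ → ℝ) (P : ℕ → Fin k → ℝ)
    (hreg : IsRegularDriftSeq n c Δ)
    (hpmf : ∀ i ∈ Finset.Icc 1 n, IsPMF (P i))
    (hdrift : ∀ i ∈ Finset.Icc 1 n, TV (P i) (P n) ≤ Δ i) :
    Exp (n := n) P (fun x => TV (P n) (empiricalDist k r x)) ≤
      (1 / 2) * Real.sqrt ((k : ℝ) / r) + Δ (n - r + 1) := by
  classical
  obtain ⟨hΔ0, hΔmono, -, -⟩ := hreg
  have hp0 : ∀ i : Fin n, ∀ a, 0 ≤ P (i.1 + 1) a :=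
    fun i => (hpmf (i.1 + 1) (by simp [Finset.mem_Icc])).1
  have hp1 : ∀ i : Fin n, ∑ a, P (i.1 + 1) a = 1 :=
    fun i => (hpmf (i.1 + 1) (by simp [Finset.mem_Icc])).2
  have hr0 : (0 : ℝ) < r := by exact_mod_cast hr1
  have hcount : ∑ i : Fin n, (if n - r ≤ i.1 then (1 : ℝ) else 0) = r := count_sum n r hrn
  set m : Fin k → ℝ :=
    fun j => (1 / (r : ℝ)) * ∑ i : Fin n, (if n - r ≤ i.1 then P (i.1 + 1) j else 0) with hm
  have hm0 : ∀ j, 0 ≤ m j := by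
    intro j
    apply mul_nonneg (by positivity)
    exact Finset.sum_nonneg fun i _ => by split_ifs with h; exacts [hp0 i j, le_refl 0]
  have hmsum : ∑ j, m j = 1 := by
    calc ∑ j, m j
        = (1 / (r : ℝ)) * ∑ i : Fin n, ∑ j, (if n - r ≤ i.1 then P (i.1 + 1) j else 0) := by
          rw [← Finset.mul_sum, Finset.sum_comm]
      _ = (1 / (r : ℝ)) * ∑ i : Fin n, (if n - r ≤ i.1 then (1 : ℝ) else 0) := by
          congr 1
          exact Finset.sum_congr rfl fun i _ => by split_ifs with h <;> simp [hp1 i]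
      _ = 1 := by rw [hcount]; field_simp
  -- Step E : bias term
  have hTVm : (1 / 2) * ∑ j, |m j - P n j| ≤ Δ (n - r + 1) := by
    have key : ∀ j, m j - P n j
        = (1 / (r : ℝ)) * ∑ i : Fin n, (if n - r ≤ i.1 then P (i.1 + 1) j - P n j else 0) := by
      intro j
      have h1 : ∑ i : Fin n, (if n - r ≤ i.1 then P n j else 0)
          = (∑ i : Fin n, if n - r ≤ i.1 then (1 : ℝ) else 0) * P n j := by
        rw [Finset.sum_mul]
        exact Finset.sum_congr rfl fun i _ => by split_ifs <;> simp
      have h2 : P n j = (1 / (r : ℝ)) * ∑ i : Fin n, (if n - r ≤ i.1 then P n j else 0) := by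
        rw [h1, hcount]; field_simp
      calc m j - P n j
          = (1 / (r : ℝ)) * (∑ i : Fin n, (if n - r ≤ i.1 then P (i.1 + 1) j else 0)
              - ∑ i : Fin n, (if n - r ≤ i.1 then P n j else 0)) := by
            have hmj : m j = (1 / (r : ℝ)) * ∑ i : Fin n,
                (if n - r ≤ i.1 then P (i.1 + 1) j else 0) := rfl
            rw [hmj]
            linear_combination -h2
        _ = (1 / (r : ℝ)) * ∑ i : Fin n, (if n - r ≤ i.1 then P (i.1 + 1) j - P n j else 0) := by
            rw [← Finset.sum_sub_distrib]
            congr 1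
            exact Finset.sum_congr rfl fun i _ => by split_ifs <;> simp
    have habs : ∀ j, |m j - P n j|
        ≤ (1 / (r : ℝ)) * ∑ i : Fin n, (if n - r ≤ i.1 then |P (i.1 + 1) j - P n j| else 0) := by
      intro j
      rw [key j, abs_mul, abs_of_nonneg (by positivity : (0:ℝ) ≤ 1 / (r:ℝ))]
      apply mul_le_mul_of_nonneg_left _ (by positivity)
      calc |∑ i : Fin n, (if n - r ≤ i.1 then P (i.1 + 1) j - P n j else 0)|
          ≤ ∑ i : Fin n, |if n - r ≤ i.1 then P (i.1 + 1) j - P n j else 0| :=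
            Finset.abs_sum_le_sum_abs _ _
        _ = ∑ i : Fin n, (if n - r ≤ i.1 then |P (i.1 + 1) j - P n j| else 0) :=
            Finset.sum_congr rfl fun i _ => by split_ifs <;> simp
    calc (1 / 2) * ∑ j, |m j - P n j|
        ≤ (1 / 2) * ∑ j, (1 / (r : ℝ)) *
            ∑ i : Fin n, (if n - r ≤ i.1 then |P (i.1 + 1) j - P n j| else 0) := by
          apply mul_le_mul_of_nonneg_left _ (by norm_num)
          exact Finset.sum_le_sum fun j _ => habs j
      _ = (1 / (r : ℝ)) * ∑ i : Fin n,
            (if n - r ≤ i.1 then (1 / 2) * ∑ j, |P (i.1 + 1) j - P n j| else 0) := by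
          rw [← Finset.mul_sum, Finset.sum_comm]
          have e : ∀ i : Fin n, (∑ j : Fin k, if n - r ≤ i.1 then |P (i.1 + 1) j - P n j| else 0)
              = (if n - r ≤ i.1 then ∑ j : Fin k, |P (i.1 + 1) j - P n j| else 0) := fun i => by
            split_ifs <;> simp
          have e2 : (∑ i : Fin n, ∑ j : Fin k, if n - r ≤ i.1 then |P (i.1 + 1) j - P n j| else 0)
              = ∑ i : Fin n, (if n - r ≤ i.1 then ∑ j : Fin k, |P (i.1 + 1) j - P n j| else 0) :=
            Finset.sum_congr rfl fun i _ => e i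
          have e4 : (∑ i : Fin n,
                if n - r ≤ i.1 then (1 / 2) * ∑ j : Fin k, |P (i.1 + 1) j - P n j| else 0)
              = (1 / 2) * ∑ i : Fin n,
                (if n - r ≤ i.1 then ∑ j : Fin k, |P (i.1 + 1) j - P n j| else 0) := by
            rw [Finset.mul_sum]
            exact Finset.sum_congr rfl fun i _ => by split_ifs <;> ring
          rw [e2, e4]
          ring
      _ ≤ (1 / (r : ℝ)) * ∑ i : Fin n, (if n - r ≤ i.1 then Δ (n - r + 1) else 0) := by
          apply mul_le_mul_of_nonneg_left _ (by positivity)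
          refine Finset.sum_le_sum fun i _ => ?_
          split_ifs with h
          · have hd : TV (P (i.1 + 1)) (P n) ≤ Δ (i.1 + 1) :=
              hdrift (i.1 + 1) (by simp [Finset.mem_Icc])
            have hmono : Δ (i.1 + 1) ≤ Δ (n - r + 1) :=
              drift_mono n Δ hΔmono (by omega) (by omega) (by omega)
            exact le_trans hd hmono
          · exact le_refl 0
      _ = Δ (n - r + 1) := by
          have : ∑ i : Fin n, (if n - r ≤ i.1 then Δ (n - r + 1) else 0)
              = (∑ i : Fin n, if n - r ≤ i.1 then (1 : ℝ) else 0) * Δ (n - r + 1) := by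
            rw [Finset.sum_mul]
            exact Finset.sum_congr rfl fun i _ => by split_ifs <;> simp
          rw [this, hcount]; field_simp
  -- Step C : per-coordinate variance bound
  have hvar : ∀ j, Exp (n := n) P (fun x => |empiricalDist k r x j - m j|)
      ≤ Real.sqrt (m j / r) := by
    intro j
    set cj : Fin n → Fin k → ℝ :=
      fun i a => if n - r ≤ i.1 then (if a = j then 1 else 0) - P (i.1 + 1) j else 0 with hcj
    have hdiff : ∀ x : Fin n → Fin k,
        empiricalDist k r x j - m j = (1 / (r : ℝ)) * ∑ i, cj i (x i) := by
      intro x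
      unfold empiricalDist
      rw [hm]; simp only
      rw [← mul_sub, ← Finset.sum_sub_distrib]
      congr 1
      refine Finset.sum_congr rfl fun i _ => ?_
      rw [hcj]; simp only
      by_cases h1 : n - r ≤ i.1 <;> by_cases h2 : x i = j <;> simp [h1, h2]
    have hmean : ∀ i, ∑ a, P (i.1 + 1) a * cj i a = 0 := by
      intro i
      rw [hcj]; simp only
      by_cases h : n - r ≤ i.1
      · simp only [if_pos h, mul_sub, Finset.sum_sub_distrib, mul_ite, mul_one, mul_zero]
        rw [Finset.sum_ite_eq' Finset.univ j (fun a => P (i.1 + 1) a), ← Finset.sum_mul, hp1 i]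
        simp
      · simp [h]
    have hsq : ∀ i, ∑ a, P (i.1 + 1) a * cj i a ^ 2
        ≤ (if n - r ≤ i.1 then P (i.1 + 1) j else 0) := by
      intro i
      by_cases h : n - r ≤ i.1
      · have expand : ∀ a, P (i.1 + 1) a * cj i a ^ 2
            = (if a = j then P (i.1 + 1) a else 0) * (1 - 2 * P (i.1 + 1) j)
              + P (i.1 + 1) j ^ 2 * P (i.1 + 1) a := by
          intro a
          rw [hcj]; simp only [if_pos h]
          by_cases ha : a = j <;> simp [ha] <;> ring
        rw [Finset.sum_congr rfl fun a _ => expand a, Finset.sum_add_distrib,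
          ← Finset.sum_mul, ← Finset.mul_sum,
          Finset.sum_ite_eq' Finset.univ j (fun a => P (i.1 + 1) a), hp1 i, if_pos h]
        simp only [Finset.mem_univ, if_pos]
        nlinarith [sq_nonneg (P (i.1 + 1) j)]
      · rw [if_neg h]
        apply le_of_eq
        refine Finset.sum_eq_zero fun a _ => ?_
        rw [hcj]; simp [h]
    have hSrm : ∑ i : Fin n, (if n - r ≤ i.1 then P (i.1 + 1) j else 0) = r * m j := by
      rw [hm]; field_simp
    have hsecond : Exp (n := n) P (fun x => (empiricalDist k r x j - m j) ^ 2) ≤ m j / r := by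
      have heq : (fun x : Fin n → Fin k => (empiricalDist k r x j - m j) ^ 2)
          = fun x => (1 / (r : ℝ)) ^ 2 * (∑ i, cj i (x i)) ^ 2 :=
        funext fun x => by rw [hdiff x, mul_pow]
      rw [heq, exp_const_mul, exp_sq_sum P hp1 cj hmean]
      calc (1 / (r : ℝ)) ^ 2 * ∑ i : Fin n, ∑ a, P (i.1 + 1) a * cj i a ^ 2
          ≤ (1 / (r : ℝ)) ^ 2 * ∑ i : Fin n, (if n - r ≤ i.1 then P (i.1 + 1) j else 0) :=
            mul_le_mul_of_nonneg_left (Finset.sum_le_sum fun i _ => hsq i) (by positivity)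
        _ = m j / r := by rw [hSrm]; field_simp
    calc Exp (n := n) P (fun x => |empiricalDist k r x j - m j|)
        ≤ Real.sqrt (Exp (n := n) P (fun x => (empiricalDist k r x j - m j) ^ 2)) :=
          exp_abs_le_sqrt P hp0 hp1 _
      _ ≤ Real.sqrt (m j / r) := Real.sqrt_le_sqrt hsecond
  -- Step D : sum of square roots
  have hsumsqrt : ∑ j, Real.sqrt (m j / r) ≤ Real.sqrt ((k : ℝ) / r) := by
    have hnn : 0 ≤ ∑ j, Real.sqrt (m j / r) :=
      Finset.sum_nonneg fun j _ => Real.sqrt_nonneg _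
    rw [Real.le_sqrt hnn (by positivity)]
    calc (∑ j, Real.sqrt (m j / r)) ^ 2
        = (∑ j, Real.sqrt (m j / r) * 1) ^ 2 := by simp
      _ ≤ (∑ j, Real.sqrt (m j / r) ^ 2) * (∑ _j : Fin k, (1 : ℝ) ^ 2) :=
          Finset.sum_mul_sq_le_sq_mul_sq _ _ _
      _ = (∑ j, m j / r) * k := by
          congr 1
          · exact Finset.sum_congr rfl fun j _ =>
              Real.sq_sqrt (div_nonneg (hm0 j) hr0.le)
          · simp
      _ = (k : ℝ) / r := by
          rw [← Finset.sum_div, hmsum]; ring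
  -- Step A : expectation of TV as a sum over symbols
  have stepA : Exp (n := n) P (fun x => TV (P n) (empiricalDist k r x))
      = (1 / 2) * ∑ j, Exp (n := n) P (fun x => |P n j - empiricalDist k r x j|) := by
    have h1 : (fun x : Fin n → Fin k => TV (P n) (empiricalDist k r x))
        = fun x => (1 / 2 : ℝ) * ∑ j, |P n j - empiricalDist k r x j| := rfl
    rw [h1, exp_const_mul]
    congr 1
    exact exp_sum P Finset.univ (fun j x => |P n j - empiricalDist k r x j|)
  -- Step B : triangle inequality per symbol
  have stepB : ∀ j, Exp (n := n) P (fun x => |P n j - empiricalDist k r x j|)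
      ≤ Exp (n := n) P (fun x => |empiricalDist k r x j - m j|) + |m j - P n j| := by
    intro j
    have hpt : ∀ x : Fin n → Fin k, |P n j - empiricalDist k r x j|
        ≤ |empiricalDist k r x j - m j| + |m j - P n j| := by
      intro x
      rw [abs_sub_comm (P n j)]
      exact abs_sub_le _ _ _
    calc Exp (n := n) P (fun x => |P n j - empiricalDist k r x j|)
        ≤ Exp (n := n) P (fun x => |empiricalDist k r x j - m j| + |m j - P n j|) :=
          exp_mono P hp0 hpt
      _ = Exp (n := n) P (fun x => |empiricalDist k r x j - m j|) + |m j - P n j| := by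
          rw [exp_add]
          congr 1
          exact exp_const P hp1 _
  -- Combine
  calc Exp (n := n) P (fun x => TV (P n) (empiricalDist k r x))
      = (1 / 2) * ∑ j, Exp (n := n) P (fun x => |P n j - empiricalDist k r x j|) := stepA
    _ ≤ (1 / 2) * ∑ j, (Exp (n := n) P (fun x => |empiricalDist k r x j - m j|)
          + |m j - P n j|) := by
        apply mul_le_mul_of_nonneg_left _ (by norm_num)
        exact Finset.sum_le_sum fun j _ => stepB j
    _ = (1 / 2) * ∑ j, Exp (n := n) P (fun x => |empiricalDist k r x j - m j|)
          + (1 / 2) * ∑ j, |m j - P n j| := by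
        rw [Finset.sum_add_distrib]; ring
    _ ≤ (1 / 2) * ∑ j, Real.sqrt (m j / r) + Δ (n - r + 1) :=
        add_le_add (mul_le_mul_of_nonneg_left
          (Finset.sum_le_sum fun j _ => hvar j) (by norm_num)) hTVm
    _ ≤ (1 / 2) * Real.sqrt ((k : ℝ) / r) + Δ (n - r + 1) :=
        add_le_add (mul_le_mul_of_nonneg_left hsumsqrt (by norm_num)) le_rfl
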